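/- Under the same hypotheses (area dπ, ∫ K dA = 2π d(3-d), K ≤ 4 pointwise and (f∘K) integrable for f(K)=((K-4)²+4)/(6-K)), one has 2d² - 4d + 4 ≤ (1/π) ∫_Σ ((K-4)² + 4)/(6-K) dA. -/

import Mathlib

open MeasureTheory Real

lemma ptwise_aux (v t : ℝ) (hv : 0 < v) (ht : t ≤ 4) :
    ((v - 4 + 8/v) - (-1 + 8/v^2) * (6 - v)) + (-1 + 8/v^2) * t
      ≤ ((t - 4)^2 + 4) / (6 - t) := by
  have hu : (0:ℝ) < 6 - t := by linarith
  have heq : ((t - 4)^2 + 4) / (6 - t)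
      - ((((v - 4 + 8/v) - (-1 + 8/v^2) * (6 - v)) + (-1 + 8/v^2) * t))
      = 8 * (v - (6 - t))^2 / ((6 - t) * v^2) := by
    field_simp
    ring
  have hpos : 0 ≤ 8 * (v - (6 - t))^2 / ((6 - t) * v^2) := by positivity
  linarith [heq ▸ hpos]

theorem stmt_12 {X : Type*} [MeasurableSpace X] (μ : Measure X) (d : ℕ) (hd : 1 ≤ d)
    (hμ : μ Set.univ = ENNReal.ofReal ((d:ℝ) * π))
    (K : X → ℝ) (hmeas : Measurable K) (hle : ∀ x, K x ≤ 4)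
    (hint : Integrable K μ)
    (hGB : ∫ x, K x ∂μ = 2 * π * (d:ℝ) * (3 - (d:ℝ)))
    (hfint : Integrable (fun x => ((K x - 4)^2 + 4) / (6 - K x)) μ) :
    2 * (d:ℝ)^2 - 4 * d + 4
      ≤ (1/π) * ∫ x, ((K x - 4)^2 + 4) / (6 - K x) ∂μ := by
  have hπ : 0 < π := pi_pos
  set D : ℝ := (d:ℝ) with hD
  have hD1 : (1:ℝ) ≤ D := by rw [hD]; exact_mod_cast hd
  have hDpos : 0 < D := by linarith
  have hv : (0:ℝ) < 2 * D := by linarith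
  set c1 : ℝ := -1 + 8/(2*D)^2 with hc1
  set c0 : ℝ := (2*D - 4 + 8/(2*D)) - c1 * (6 - 2*D) with hc0
  haveI : IsFiniteMeasure μ := ⟨by rw [hμ]; exact ENNReal.ofReal_lt_top⟩
  have hpt : ∀ x, c0 + c1 * K x ≤ ((K x - 4)^2 + 4) / (6 - K x) := fun x =>
    ptwise_aux (2*D) (K x) hv (hle x)
  have hgint : Integrable (fun x => c0 + c1 * K x) μ :=
    (integrable_const c0).add (hint.const_mul c1)
  have hmono : ∫ x, (c0 + c1 * K x) ∂μ
      ≤ ∫ x, ((K x - 4)^2 + 4) / (6 - K x) ∂μ :=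
    integral_mono hgint hfint hpt
  have htoReal : (μ Set.univ).toReal = D * π := by
    rw [hμ, ENNReal.toReal_ofReal (by positivity)]
  have hgval : ∫ x, (c0 + c1 * K x) ∂μ = c0 * (D * π) + c1 * (2 * π * D * (3 - D)) := by
    rw [integral_add (integrable_const c0) (hint.const_mul c1),
      integral_const, measureReal_def, integral_const_mul, hGB, htoReal, smul_eq_mul]
    ring
  have hkey : π * (2 * D^2 - 4 * D + 4) = c0 * (D * π) + c1 * (2 * π * D * (3 - D)) := by
    rw [hc0, hc1]
    field_simp
    ring
  have hI : π * (2 * D^2 - 4 * D + 4) ≤ ∫ x, ((K x - 4)^2 + 4) / (6 - K x) ∂μ := by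
    rw [hkey, ← hgval]; exact hmono
  have h2 : 2*D^2 - 4*D + 4 = (1/π) * (π * (2*D^2 - 4*D + 4)) := by
    field_simp
  rw [h2]
  exact mul_le_mul_of_nonneg_left hI (by positivity)
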